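/- If T and U are regular tableaux on [n] = {1, …, n} with T_{{1,2,3}} = U_{{1,2,3}}, then T = U. -/

import Mathlib

noncomputable section

/-- A tableau on the finite set `A ⊂ ℕ`: a family of rows, where the row of `i ∈ A`
is a word on `A \ {i}`, and rows of indices outside `A` are empty. -/
def IsTableau (A : Finset ℕ) (T : ℕ → List ℕ) : Prop :=
  (∀ i ∈ A, ∀ x ∈ T i, x ∈ A ∧ x ≠ i) ∧ ∀ i, i ∉ A → T i = []

/-- The restriction of a tableau to `X`: keep only the rows indexed by `X` and in each
of them only the letters belonging to `X`. -/
def restrictTab (X : Finset ℕ) (T : ℕ → List ℕ) : ℕ → List ℕ :=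
  fun i => if i ∈ X then (T i).filter (· ∈ X) else []

/-- The (1-based) rank of `a` in the finite set `A`. -/
def rankIn (A : Finset ℕ) (a : ℕ) : ℕ := (A.filter (· ≤ a)).card

/-- Order equivalence of a tableau on `X` with a tableau on `Y`: they have the same
normal form after replacing every letter by its rank, rows being matched according to
the increasing enumerations of `X` and `Y`. -/
def TabEquiv (X Y : Finset ℕ) (T U : ℕ → List ℕ) : Prop :=
  X.card = Y.card ∧ ∀ j < X.card,
    ((T ((Finset.sort X (· ≤ ·)).getD j 0)).map (rankIn X)) =
    ((U ((Finset.sort Y (· ≤ ·)).getD j 0)).map (rankIn Y))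

/-- A regular tableau on `A`: `|A| ≥ 4` and all restrictions to 3-element subsets are
order equivalent. -/
def IsRegularTableau (A : Finset ℕ) (T : ℕ → List ℕ) : Prop :=
  IsTableau A T ∧ 4 ≤ A.card ∧
    ∀ X Y : Finset ℕ, X ⊆ A → Y ⊆ A → X.card = 3 → Y.card = 3 →
      TabEquiv X Y (restrictTab X T) (restrictTab Y T)

/-- A tableau on `A` is pangrammatic if every element of `A` occurs in some row. -/
def Pangrammatic (A : Finset ℕ) (T : ℕ → List ℕ) : Prop :=
  ∀ a ∈ A, ∃ i ∈ A, a ∈ T i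

/-! ### Balanced blocks on the four-letter alphabet `a ≺ b ≺ c ≺ d`, encoded as
`0 ≺ 1 ≺ 2 ≺ 3` in `Fin 4`. -/

/-- A (formal) balanced block on the alphabet `{a ≺ b ≺ c ≺ d}`. -/
inductive Blk : Type
  | ab (r : ℕ) | ba (r : ℕ) | cd (r : ℕ) | dc (r : ℕ)
deriving DecidableEq

/-- The size parameter of a block. -/
def Blk.r : Blk → ℕ
  | .ab r => r | .ba r => r | .cd r => r | .dc r => r

/-- Whether a block is on the letters `{c, d}`. -/
def Blk.isCD : Blk → Prop
  | .cd _ => True | .dc _ => True | _ => False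

/-- The word of a block: `a^r b^r`, `b^r a^r`, `c^r d^r` or `d^r c^r`. -/
def Blk.word : Blk → List (Fin 4)
  | .ab r => List.replicate r 0 ++ List.replicate r 1
  | .ba r => List.replicate r 1 ++ List.replicate r 0
  | .cd r => List.replicate r 2 ++ List.replicate r 3
  | .dc r => List.replicate r 3 ++ List.replicate r 2

/-- All blocks in the list have size at least 1. -/
def GoodList (L : List Blk) : Prop := ∀ b ∈ L, 0 < b.r

/-- The word obtained by concatenating the words of the blocks in `L`. -/
def wordOf (L : List Blk) : List (Fin 4) := (L.map Blk.word).flatten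

/-- The language `B*_(ab,cd)` of concatenations of balanced blocks. -/
def InBStar (w : List (Fin 4)) : Prop := ∃ L : List Blk, GoodList L ∧ wordOf L = w

/-- The language `W_(ab,cd)`: words of `B*_(ab,cd)` containing a letter from `{a,b}`
and a letter from `{c,d}`. -/
def InW (w : List (Fin 4)) : Prop :=
  InBStar w ∧ (∃ x ∈ w, x = (0 : Fin 4) ∨ x = (1 : Fin 4)) ∧
    (∃ x ∈ w, x = (2 : Fin 4) ∨ x = (3 : Fin 4))

/-- The contribution of one block to row `i` of the tableau `T^ω_n = φ_n(ω)`. -/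
def phiRow (n i : ℕ) : Blk → List ℕ
  | .ab r => if 1 < i then ((List.range (i - 1)).map fun j => List.replicate r (j + 1)).flatten else []
  | .ba r => if 1 < i then ((List.range (i - 1)).map fun j => List.replicate r (i - 1 - j)).flatten else []
  | .cd r => if i < n then ((List.range (n - i)).map fun j => List.replicate r (i + 1 + j)).flatten else []
  | .dc r => if i < n then ((List.range (n - i)).map fun j => List.replicate r (n - j)).flatten else []

/-- The tableau `T^ω_n = φ_n(ω)` on `[n]`, for the word `ω` given by the block
decomposition `L`. -/
def phiTab (n : ℕ) (L : List Blk) : ℕ → List ℕ :=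
  fun i => if 1 ≤ i ∧ i ≤ n then (L.map (phiRow n i)).flatten else []

/-- A word of `W_(ab,cd)` is well-balanced if it has a prefix in `B*_(ab,cd)` with an
even number of `a`'s and an odd number of `c`'s, and also a prefix in `B*_(ab,cd)`
with an odd number of `a`'s and an even number of `c`'s. -/
def WellBalanced (w : List (Fin 4)) : Prop :=
  (∃ u v : List (Fin 4), w = u ++ v ∧ InBStar u ∧
      Even (u.count (0 : Fin 4)) ∧ Odd (u.count (2 : Fin 4))) ∧
  (∃ u v : List (Fin 4), w = u ++ v ∧ InBStar u ∧
      Odd (u.count (0 : Fin 4)) ∧ Even (u.count (2 : Fin 4)))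

/-! ### Valid matchings -/

/-- In a tableau, `{j, k}` is weakly adjacent when row `j` starts with `k` and
row `k` starts with `j`. -/
def WeaklyAdj (T : ℕ → List ℕ) (j k : ℕ) : Prop :=
  (T j).head? = some k ∧ (T k).head? = some j

/-- Delete the first entries of rows `j` and `k`. -/
def deletePair (T : ℕ → List ℕ) (j k : ℕ) : ℕ → List ℕ :=
  fun i => if i = j ∨ i = k then (T i).tail else T i

/-- The deterministic matching process: while some row is nonempty, delete the first
entries of the rows of the lexicographically least weakly adjacent pair; `ValidRun T`
holds when the process terminates with all rows empty. -/
inductive ValidRun : (ℕ → List ℕ) → Prop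
  | done (T : ℕ → List ℕ) (h : ∀ i, T i = []) : ValidRun T
  | step (T : ℕ → List ℕ) (j k : ℕ) (hjk : j < k) (hadj : WeaklyAdj T j k)
      (hmin : ∀ j' k' : ℕ, j' < k' → WeaklyAdj T j' k' → (j < j' ∨ (j = j' ∧ k ≤ k')))
      (h : ValidRun (deletePair T j k)) : ValidRun T


/-! ### Auxiliary lemmas -/

lemma rankIn_lt (X : Finset ℕ) {a b : ℕ} (hb : b ∈ X) (hab : a < b) :
    rankIn X a < rankIn X b := by
  apply Finset.card_lt_card
  constructor
  · intro z hz
    simp only [Finset.mem_filter, decide_eq_true_eq] at hz ⊢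
    exact ⟨hz.1, le_trans hz.2 hab.le⟩
  · intro hsub
    have : b ∈ X.filter (· ≤ a) := hsub (by simp [Finset.mem_filter, hb])
    simp only [Finset.mem_filter, decide_eq_true_eq] at this
    omega

lemma rankIn_injOn (X : Finset ℕ) {a b : ℕ} (ha : a ∈ X) (hb : b ∈ X)
    (h : rankIn X a = rankIn X b) : a = b := by
  rcases lt_trichotomy a b with h' | h' | h'
  · exact absurd h (rankIn_lt X hb h').ne
  · exact h'
  · exact absurd h.symm (rankIn_lt X ha h').ne

lemma map_rank_cancel (X : Finset ℕ) : ∀ l l' : List ℕ, (∀ a ∈ l, a ∈ X) → (∀ a ∈ l', a ∈ X) →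
    l.map (rankIn X) = l'.map (rankIn X) → l = l'
  | [], [], _, _, _ => rfl
  | [], _ :: _, _, _, h => by simp at h
  | _ :: _, [], _, _, h => by simp at h
  | a :: l, b :: l', h1, h2, h => by
    simp only [List.map_cons, List.cons.injEq] at h
    have hab := rankIn_injOn X (h1 a (by simp)) (h2 b (by simp)) h.1
    rw [hab, map_rank_cancel X l l' (fun x hx => h1 x (by simp [hx]))
      (fun x hx => h2 x (by simp [hx])) h.2]

lemma pair_ext (A : Finset ℕ) (hA : 2 ≤ A.card) :
    ∀ w w' : List ℕ, (∀ a ∈ w, a ∈ A) → (∀ a ∈ w', a ∈ A) →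
    (∀ x ∈ A, ∀ y ∈ A, x ≠ y →
      w.filter (fun z => decide (z = x ∨ z = y)) =
        w'.filter (fun z => decide (z = x ∨ z = y))) →
    w = w' := by
  intro w
  induction w with
  | nil =>
    intro w' _ hw' H
    cases w' with
    | nil => rfl
    | cons b t =>
      have hb : b ∈ A := hw' b (by simp)
      obtain ⟨y, hy, hyb⟩ := Finset.exists_mem_ne hA b
      have := H b hb y hy (Ne.symm hyb)
      simp at this
  | cons a t ih =>
    intro w' hw hw' H
    cases w' with
    | nil =>
      have ha : a ∈ A := hw a (by simp)
      obtain ⟨y, hy, hya⟩ := Finset.exists_mem_ne hA a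
      have := H a ha y hy (Ne.symm hya)
      simp at this
    | cons b t' =>
      have ha : a ∈ A := hw a (by simp)
      have hb : b ∈ A := hw' b (by simp)
      by_cases hab : a = b
      · subst hab
        have ht : t = t' := by
          apply ih t' (fun x hx => hw x (by simp [hx])) (fun x hx => hw' x (by simp [hx]))
          intro x hx y hy hxy
          have := H x hx y hy hxy
          by_cases hcase : a = x ∨ a = y
          · rw [List.filter_cons, List.filter_cons,
              if_pos (by simp [hcase]), if_pos (by simp [hcase])] at this
            exact (List.cons_eq_cons.mp this).2
          · rw [List.filter_cons, List.filter_cons,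
              if_neg (by simp [hcase]), if_neg (by simp [hcase])] at this
            exact this
        rw [ht]
      · exfalso
        have := H a ha b hb hab
        rw [List.filter_cons, List.filter_cons,
          if_pos (by simp), if_pos (by simp)] at this
        exact hab (List.cons_eq_cons.mp this).1

lemma restrict_eq (n : ℕ) (T U : ℕ → List ℕ)
    (hT : IsRegularTableau (Finset.Icc 1 n) T) (hU : IsRegularTableau (Finset.Icc 1 n) U)
    (h : restrictTab {1, 2, 3} T = restrictTab {1, 2, 3} U)
    (X : Finset ℕ) (hX : X ⊆ Finset.Icc 1 n) (hcard : X.card = 3) :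
    restrictTab X T = restrictTab X U := by
  have hn : 4 ≤ n := by
    have h4 := hT.2.1
    rw [Nat.card_Icc] at h4
    omega
  have h123 : ({1, 2, 3} : Finset ℕ) ⊆ Finset.Icc 1 n := by
    intro z hz
    simp only [Finset.mem_insert, Finset.mem_singleton] at hz
    simp only [Finset.mem_Icc]
    omega
  have hc123 : ({1, 2, 3} : Finset ℕ).card = 3 := rfl
  have eT := (hT.2.2 X {1, 2, 3} hX h123 hcard hc123).2
  have eU := (hU.2.2 X {1, 2, 3} hX h123 hcard hc123).2
  funext i
  by_cases hi : i ∈ X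
  · obtain ⟨j, hj, hji⟩ : ∃ j < X.card,
        (Finset.sort X (· ≤ ·)).getD j 0 = i := by
      have hmem : i ∈ Finset.sort X (· ≤ ·) := (Finset.mem_sort _).2 hi
      obtain ⟨j, hj, hget⟩ := List.mem_iff_getElem.1 hmem
      refine ⟨j, by simpa using hj, ?_⟩
      rw [List.getD_eq_getElem _ _ hj, hget]
    have key : ((restrictTab X T i).map (rankIn X)) = ((restrictTab X U i).map (rankIn X)) := by
      rw [← hji]
      rw [eT j hj, eU j hj, h]
    refine map_rank_cancel X _ _ ?_ ?_ key
    all_goals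
      intro a ha
      simp only [restrictTab, if_pos hi, List.mem_filter, decide_eq_true_eq] at ha
      exact ha.2
  · simp [restrictTab, if_neg hi]

/-- **Lemma.** A regular tableau on `[n]` is determined by its restriction
to `{1, 2, 3}`. -/
theorem regularTableau_ext (n : ℕ) (T U : ℕ → List ℕ)
    (hT : IsRegularTableau (Finset.Icc 1 n) T) (hU : IsRegularTableau (Finset.Icc 1 n) U)
    (h : restrictTab {1, 2, 3} T = restrictTab {1, 2, 3} U) :
    T = U := by
  have hn : 4 ≤ n := by
    have h4 := hT.2.1
    rw [Nat.card_Icc] at h4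
    omega
  have hres := restrict_eq n T U hT hU h
  funext i
  by_cases hi : i ∈ Finset.Icc 1 n
  · set A := (Finset.Icc 1 n).erase i with hA
    have hAcard : 2 ≤ A.card := by
      rw [hA, Finset.card_erase_of_mem hi, Nat.card_Icc]
      omega
    have hTmem : ∀ a ∈ T i, a ∈ A := fun a ha =>
      Finset.mem_erase.2 ⟨(hT.1.1 i hi a ha).2, (hT.1.1 i hi a ha).1⟩
    have hUmem : ∀ a ∈ U i, a ∈ A := fun a ha =>
      Finset.mem_erase.2 ⟨(hU.1.1 i hi a ha).2, (hU.1.1 i hi a ha).1⟩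
    apply pair_ext A hAcard _ _ hTmem hUmem
    intro x hx y hy hxy
    rw [hA, Finset.mem_erase] at hx hy
    set X : Finset ℕ := {i, x, y} with hX
    have hXsub : X ⊆ Finset.Icc 1 n := by
      intro z hz
      simp only [hX, Finset.mem_insert, Finset.mem_singleton] at hz
      rcases hz with rfl | rfl | rfl
      · exact hi
      · exact hx.2
      · exact hy.2
    have hXcard : X.card = 3 := by
      rw [hX, Finset.card_insert_of_notMem (by simp [hx.1.symm, hy.1.symm]),
        Finset.card_insert_of_notMem (by simp [hxy]), Finset.card_singleton]
    have hiX : i ∈ X := by simp [hX]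
    have hrow := congrFun (hres X hXsub hXcard) i
    simp only [restrictTab, if_pos hiX] at hrow
    have hfT : (T i).filter (fun z => decide (z = x ∨ z = y)) = (T i).filter (· ∈ X) := by
      apply List.filter_congr
      intro z hz
      have hzi : z ≠ i := (hT.1.1 i hi z hz).2
      simp [hX, hzi]
    have hfU : (U i).filter (fun z => decide (z = x ∨ z = y)) = (U i).filter (· ∈ X) := by
      apply List.filter_congr
      intro z hz
      have hzi : z ≠ i := (hU.1.1 i hi z hz).2
      simp [hX, hzi]
    rw [hfT, hfU, hrow]
  · rw [hT.1.2 i hi, hU.1.2 i hi]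

end
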